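/- For n ≥ 2, θ_1^{(n)} = C_{n-1}, the (n-1)-st Catalan number. -/

import Mathlib

open Finset

/-- `l` encodes a (non-degenerate) indexing matrix on `n` points: the columns,
listed left to right, as pairs `(top entry, bottom entry)`.  Entries lie in
`[0, n-1]`, the first row is strictly increasing, the second row is weakly
increasing, repeated second-row entries are `0`, and each top entry is at
least the corresponding bottom entry. -/
def IsIndexingMatrix (n : ℕ) (l : List (ℕ × ℕ)) : Prop :=
  1 ≤ l.length ∧ l.length ≤ n ∧
  (∀ p ∈ l, p.1 < n ∧ p.2 ≤ p.1) ∧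
  l.Pairwise (fun p q => p.1 < q.1 ∧ p.2 ≤ q.2 ∧ (p.2 = q.2 → p.2 = 0))

/-- A positive indexing matrix: all entries are positive. -/
def IsPositiveIndexingMatrix (n : ℕ) (l : List (ℕ × ℕ)) : Prop :=
  IsIndexingMatrix n l ∧ ∀ p ∈ l, 0 < p.1 ∧ 0 < p.2

/-- `θ_k^{(n)}`: the number of positive indexing matrices whose `(1,1)` entry
equals `k`. -/
noncomputable def theta (n k : ℕ) : ℕ :=
  Nat.card {l : List (ℕ × ℕ) //
    IsPositiveIndexingMatrix n l ∧ l.head?.map Prod.fst = some k}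

/-- The blob-rank of an indexing matrix: the number of its columns containing
a `0`. -/
def blobRank (l : List (ℕ × ℕ)) : ℕ := l.countP (fun p => p.1 == 0 || p.2 == 0)

/-- `Ω_r^{(n)}`: the number of indexing matrices on `n` points of blob-rank `r`,
the degenerate indexing matrix being counted in `Ω_0^{(n)}`. -/
noncomputable def Omega (n r : ℕ) : ℕ :=
  Nat.card {l : List (ℕ × ℕ) // IsIndexingMatrix n l ∧ blobRank l = r} +
    (if r = 0 then 1 else 0)

/-- `χ_k^{(n)} = Σ_{i₁+⋯+i_k = n-k} C_{i₁} ⋯ C_{i_k}` (Catalan numbers). -/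
def chi (n k : ℕ) : ℕ :=
  ∑ t ∈ Finset.Nat.antidiagonalTuple k (n - k), ∏ j, catalan (t j)

/-- A Temperley–Lieb diagram on `n` points: a non-crossing perfect matching of
`2n` boundary points numbered clockwise, given by a fixed-point free
involution. -/
structure TLDiagram (n : ℕ) where
  f : Fin (2 * n) → Fin (2 * n)
  involutive : ∀ x, f (f x) = x
  noFixedPoint : ∀ x, f x ≠ x
  noncrossing : ∀ a b : Fin (2 * n), a < b → b < f a → f a < f b → False

/-- `a` is the left (smaller) endpoint of an arc of `D`. -/
def TLDiagram.IsArc {n : ℕ} (D : TLDiagram n) (a : Fin (2 * n)) : Prop :=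
  a < D.f a

/-- The arc with left endpoint `a` is exposed to the left side of the diagram,
i.e. it is not nested inside any other arc. -/
def TLDiagram.IsExposed {n : ℕ} (D : TLDiagram n) (a : Fin (2 * n)) : Prop :=
  a < D.f a ∧ ∀ c, ¬ (c < a ∧ D.f a < D.f c)

/-- The number of arcs of `D` exposed to the left side. -/
noncomputable def exposedCount {n : ℕ} (D : TLDiagram n) : ℕ :=
  Nat.card {a : Fin (2 * n) // D.IsExposed a}

/-- A `d`-abacus blob diagram on `n` points: a TL-diagram together with blobs
on some arcs exposed to the left, one bead count in `ℤ/dℤ` on every arc, and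
an extra bead count on every blobbed arc (its second component). -/
structure AbacusBlobDiagram (d n : ℕ) where
  base : TLDiagram n
  blob : Fin (2 * n) → Bool
  blob_exposed : ∀ a, blob a = true → base.IsExposed a
  beads₁ : Fin (2 * n) → ZMod d
  beads₂ : Fin (2 * n) → ZMod d
  beads₁_arc : ∀ a, ¬ base.IsArc a → beads₁ a = 0
  beads₂_blob : ∀ a, blob a = false → beads₂ a = 0

/-- A `d`-abacus hook diagram on `n` points: a blobbed TL-diagram in which all
blobbed arcs are merged into the single hook component through `0, 0'`, with a
bead count in `ℤ/dℤ` on every unblobbed arc and one on the hook component. -/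
structure AbacusHookDiagram (d n : ℕ) where
  base : TLDiagram n
  blob : Fin (2 * n) → Bool
  blob_exposed : ∀ a, blob a = true → base.IsExposed a
  beads : Fin (2 * n) → ZMod d
  beads_arc : ∀ a, ¬ base.IsArc a ∨ blob a = true → beads a = 0
  hookBeads : ZMod d


namespace Stmt2Aux

open PowerSeries


noncomputable def CS : PowerSeries ℕ := PowerSeries.mk catalan

lemma CS_key : CS = 1 + PowerSeries.X * CS ^ 2 := by
  ext n
  cases n with
  | zero => simp [CS]
  | succ m =>
    rw [map_add, PowerSeries.coeff_one, if_neg (Nat.succ_ne_zero m), coeff_succ_X_mul,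
      zero_add, pow_two, PowerSeries.coeff_mul, Finset.Nat.sum_antidiagonal_eq_sum_range_succ_mk]
    simp only [CS, coeff_mk]
    rw [catalan_succ]
    exact Fin.sum_univ_eq_sum_range (fun i => catalan i * catalan (m - i)) (m + 1)

lemma CS_pow_key (k : ℕ) : CS ^ (k + 1) = CS ^ k + PowerSeries.X * CS ^ (k + 2) := by
  calc CS ^ (k+1) = CS ^ k * CS := by ring
  _ = CS ^ k * (1 + PowerSeries.X * CS ^ 2) := by rw [← CS_key]
  _ = CS ^ k + PowerSeries.X * CS ^ (k + 2) := by ring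

lemma L2 (m k : ℕ) :
    (PowerSeries.coeff (m + 1)) (CS ^ (k + 1)) =
      (PowerSeries.coeff (m + 1)) (CS ^ k) + (PowerSeries.coeff m) (CS ^ (k + 2)) := by
  conv_lhs => rw [CS_pow_key]
  rw [map_add, coeff_succ_X_mul]

lemma coeff_zero_CS_pow (k : ℕ) : (PowerSeries.coeff 0) (CS ^ k) = 1 := by
  rw [PowerSeries.coeff_zero_eq_constantCoeff, map_pow]
  have : (constantCoeff : PowerSeries ℕ →+* ℕ) CS = 1 := by simp [CS, ← PowerSeries.coeff_zero_eq_constantCoeff]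
  rw [this, one_pow]

lemma L1 (p q : ℕ) :
    ∑ t ∈ range (q + 1), (PowerSeries.coeff p) (CS ^ (t + 2)) =
      (PowerSeries.coeff (p + 1)) (CS ^ (q + 1)) := by
  induction q with
  | zero =>
    rw [Finset.sum_range_one]
    have := L2 p 0
    simpa [pow_one] using this.symm
  | succ q ih =>
    rw [Finset.sum_range_succ, ih, L2 p (q + 1)]

lemma L4 (p q : ℕ) :
    (PowerSeries.coeff (p + 1)) (CS ^ (q + 2)) =
      1 + ∑ s ∈ range (p + 1), (PowerSeries.coeff (p + 1 - s)) (CS ^ (s + q + 1)) := by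
  induction p generalizing q with
  | zero =>
    rw [Finset.sum_range_one, L2 0 (q + 1), coeff_zero_CS_pow]
    ring_nf
  | succ p ih =>
    rw [L2 (p + 1) (q + 1), ih (q + 1)]
    conv_rhs => rw [Finset.sum_range_succ']
    have h : ∀ s ∈ range (p + 1),
        (PowerSeries.coeff (p + 1 + 1 - (s + 1))) (CS ^ (s + 1 + q + 1)) =
        (PowerSeries.coeff (p + 1 - s)) (CS ^ (s + (q + 1) + 1)) := by
      intro s _
      have e1 : p + 1 + 1 - (s + 1) = p + 1 - s := by omega
      have e2 : s + 1 + q + 1 = s + (q + 1) + 1 := by omega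
      rw [e1, e2]
    rw [Finset.sum_congr rfl h]
    norm_num
    ring

def H : ℕ → ℕ → ℕ
  | 0, _ => 1
  | p + 1, q => 1 + ∑ s ∈ range (p + 1), ∑ t ∈ range (s + q + 1), H (p - s) t
termination_by p q => p
decreasing_by omega

lemma H_eq_coeff (p q : ℕ) : H p q = (PowerSeries.coeff p) (CS ^ (q + 2)) := by
  induction p using Nat.strong_induction_on generalizing q with
  | _ p ih =>
    match p with
    | 0 => rw [H, coeff_zero_CS_pow]
    | p + 1 =>
      rw [H]
      have hinner : ∀ s ∈ range (p + 1),
          ∑ t ∈ range (s + q + 1), H (p - s) t =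
            (PowerSeries.coeff (p + 1 - s)) (CS ^ (s + q + 1)) := by
        intro s hs
        rw [Finset.mem_range] at hs
        have : ∀ t ∈ range (s + q + 1), H (p - s) t
            = (PowerSeries.coeff (p - s)) (CS ^ (t + 2)) := by
          intro t _
          exact ih (p - s) (by omega) t
        rw [Finset.sum_congr rfl this, L1 (p - s) (s + q)]
        have e1 : p - s + 1 = p + 1 - s := by omega
        rw [e1]
      rw [Finset.sum_congr rfl hinner, ← L4]

lemma H_zero (p : ℕ) : H p 0 = catalan (p + 1) := by
  rw [H_eq_coeff]
  have h2 := L2 p 0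
  have h1 : (PowerSeries.coeff (p+1)) CS = catalan (p+1) := by simp [CS]
  norm_num [PowerSeries.coeff_one] at h2 ⊢
  omega

def Dom (N A B : ℕ) : Finset (ℕ × ℕ) :=
  ((Icc (A + 1) N) ×ˢ (Icc (B + 1) N)).filter fun p => p.2 ≤ p.1

lemma mem_Dom {N A B : ℕ} {p : ℕ × ℕ} :
    p ∈ Dom N A B ↔ A < p.1 ∧ B < p.2 ∧ p.2 ≤ p.1 ∧ p.1 ≤ N := by
  simp only [Dom, Finset.mem_filter, Finset.mem_product, Finset.mem_Icc]
  omega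

def F : ℕ → ℕ → ℕ → ℕ → Finset (List (ℕ × ℕ))
  | 0, _, _, _ => {[]}
  | fuel + 1, N, A, B =>
      insert [] ((Dom N A B).biUnion fun p => (F fuel N p.1 p.2).image (List.cons p))

def Hc : ℕ → ℕ → ℕ → ℕ → ℕ
  | 0, _, _, _ => 1
  | fuel + 1, N, A, B => 1 + ∑ p ∈ Dom N A B, Hc fuel N p.1 p.2

def rel (N : ℕ) (p q : ℕ × ℕ) : Prop :=
  p.1 < q.1 ∧ p.2 < q.2 ∧ q.2 ≤ q.1 ∧ q.1 ≤ N

instance (N : ℕ) : IsTrans (ℕ × ℕ) (rel N) :=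
  ⟨fun _ _ _ h1 h2 => ⟨h1.1.trans h2.1, h1.2.1.trans h2.2.1, h2.2.2⟩⟩

lemma mem_F {fuel : ℕ} : ∀ {N A B : ℕ} {l : List (ℕ × ℕ)}, N ≤ A + fuel →
    (l ∈ F fuel N A B ↔ List.Chain (rel N) (A, B) l) := by
  induction fuel with
  | zero =>
    intro N A B l h
    simp only [F, Finset.mem_singleton]
    constructor
    · rintro rfl; exact List.Chain.nil
    · intro hc
      cases hc with
      | singleton => rfl
      | cons_cons hr _ =>
        obtain ⟨h1, _, _, h4⟩ := hr
        omega
  | succ fuel ih =>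
    intro N A B l h
    simp only [F, Finset.mem_insert, Finset.mem_biUnion, Finset.mem_image]
    constructor
    · rintro (rfl | ⟨p, hp, t, ht, rfl⟩)
      · exact List.Chain.nil
      · rw [mem_Dom] at hp
        refine List.Chain.cons ⟨hp.1, hp.2.1, hp.2.2.1, hp.2.2.2⟩ ?_
        exact (ih (by omega)).mp ht
    · intro hc
      match l, hc with
      | [], _ => exact Or.inl rfl
      | p :: t, hc =>
        rw [List.Chain, List.isChain_cons_cons] at hc
        obtain ⟨hr, hc⟩ := hc
        refine Or.inr ⟨p, mem_Dom.mpr ⟨hr.1, hr.2.1, hr.2.2.1, hr.2.2.2⟩, t, ?_, rfl⟩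
        exact (ih (by have := hr.1; omega)).mpr hc

lemma card_F (fuel : ℕ) : ∀ N A B, (F fuel N A B).card = Hc fuel N A B := by
  induction fuel with
  | zero => intro N A B; rfl
  | succ fuel ih =>
    intro N A B
    rw [F, Hc]
    have hnil : [] ∉ (Dom N A B).biUnion fun p => (F fuel N p.1 p.2).image (List.cons p) := by
      simp only [Finset.mem_biUnion, Finset.mem_image]
      rintro ⟨p, _, t, _, h⟩
      exact List.cons_ne_nil p t h
    have hdisj : ∀ p ∈ Dom N A B, ∀ q ∈ Dom N A B, p ≠ q →
        Disjoint ((F fuel N p.1 p.2).image (List.cons p))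
          ((F fuel N q.1 q.2).image (List.cons q)) := by
      intro p _ q _ hpq
      simp only [Finset.disjoint_left, Finset.mem_image]
      rintro l ⟨t, _, rfl⟩ ⟨t', _, h⟩
      exact hpq (by injection h with h1 _; exact h1.symm)
    rw [Finset.card_insert_of_notMem hnil, Finset.card_biUnion hdisj]
    have hs : ∑ u ∈ Dom N A B, ((F fuel N u.1 u.2).image (List.cons u)).card =
        ∑ p ∈ Dom N A B, Hc fuel N p.1 p.2 :=
      Finset.sum_congr rfl fun p _ => by
        rw [Finset.card_image_of_injective _ (List.cons_injective), ih]
    omega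

lemma Hc_eq_H (fuel : ℕ) : ∀ N A B, N ≤ A + fuel → B ≤ A →
    Hc fuel N A B = H (N - A) (A - B) := by
  induction fuel with
  | zero =>
    intro N A B h _
    have : N - A = 0 := by omega
    rw [this, Hc, H]
  | succ fuel ih =>
    intro N A B h hBA
    by_cases hNA : N ≤ A
    · have h0 : N - A = 0 := by omega
      have hD : Dom N A B = ∅ := by
        ext p; simp only [mem_Dom, Finset.notMem_empty, iff_false]; omega
      rw [Hc, hD, Finset.sum_empty, h0, H]
      rfl
    · push_neg at hNA
      obtain ⟨m, hm⟩ : ∃ m, N - A = m + 1 := ⟨N - A - 1, by omega⟩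
      rw [Hc, hm, H]
      congr 1
      have : ∀ p ∈ Dom N A B, Hc fuel N p.1 p.2 = H (N - p.1) (p.1 - p.2) := by
        intro p hp
        rw [mem_Dom] at hp
        exact ih N p.1 p.2 (by omega) hp.2.2.1
      rw [Finset.sum_congr rfl this]
      have hsig : ∑ x ∈ (range (m + 1)).sigma (fun s => range (s + (A - B) + 1)),
          H (m - x.1) x.2 = ∑ s ∈ range (m + 1), ∑ t ∈ range (s + (A - B) + 1), H (m - s) t :=
        Finset.sum_sigma _ _ _
      rw [← hsig]
      refine Finset.sum_nbij' (fun p => ⟨p.1 - A - 1, p.1 - p.2⟩)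
        (fun x => (A + 1 + x.1, A + 1 + x.1 - x.2)) ?_ ?_ ?_ ?_ ?_
      · rintro ⟨a, b⟩ hp
        rw [mem_Dom] at hp
        dsimp only at hp ⊢
        simp only [Finset.mem_sigma, Finset.mem_range]
        omega
      · rintro ⟨s, t⟩ hx
        simp only [Finset.mem_sigma, Finset.mem_range] at hx
        rw [mem_Dom]
        dsimp only at hx ⊢
        omega
      · rintro ⟨a, b⟩ hp
        rw [mem_Dom] at hp
        dsimp only at hp ⊢
        simp only [Prod.mk.injEq]
        omega
      · rintro ⟨s, t⟩ hx
        simp only [Finset.mem_sigma, Finset.mem_range] at hx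
        dsimp only at hx ⊢
        simp only [Sigma.mk.inj_iff, heq_eq_eq]
        omega
      · rintro ⟨a, b⟩ hp
        rw [mem_Dom] at hp
        dsimp only at hp ⊢
        have e1 : N - a = m - (a - A - 1) := by omega
        rw [e1]

lemma chain_length {N : ℕ} : ∀ (t : List (ℕ × ℕ)) (x : ℕ × ℕ),
    List.Chain (rel N) x t → t.length ≤ N - x.1 := by
  intro t
  induction t with
  | nil => intro x _; simp
  | cons q t ih =>
    intro x hc
    rw [List.Chain, List.isChain_cons_cons] at hc
    obtain ⟨hr, hc⟩ := hc
    have h2 := ih q hc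
    have h1 := hr.1
    have h4 := hr.2.2.2
    simp only [List.length_cons]
    omega

lemma chain_all {N : ℕ} {t : List (ℕ × ℕ)} {x : ℕ × ℕ}
    (hc : List.Chain (rel N) x t) : ∀ q ∈ t, rel N x q := by
  have hpw := List.isChain_iff_pairwise.mp hc
  rw [List.pairwise_cons] at hpw
  exact hpw.1

lemma P_iff (n : ℕ) (hn : 2 ≤ n) (l : List (ℕ × ℕ)) :
    (IsPositiveIndexingMatrix n l ∧ l.head?.map Prod.fst = some 1) ↔
      l ∈ (F (n - 2) (n - 1) 1 1).image (List.cons (1, 1)) := by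
  rw [Finset.mem_image]
  have hiff : ∀ t, t ∈ F (n - 2) (n - 1) 1 1 ↔ List.Chain (rel (n - 1)) (1, 1) t :=
    fun t => mem_F (by omega)
  constructor
  · rintro ⟨⟨⟨hlen1, hlenn, hent, hpw⟩, hpos⟩, hhead⟩
    match l, hpw, hent, hpos, hhead with
    | (a, b) :: t, hpw, hent, hpos, hhead =>
      have ha : a = 1 := by simpa using hhead
      have hb : b = 1 := by
        have h1 := (hent (a, b) (by simp)).2
        have h2 := (hpos (a, b) (by simp)).2
        simp at h1 h2
        omega
      subst ha; subst hb
      refine ⟨t, (hiff t).mpr ?_, rfl⟩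
      rw [List.Chain, List.isChain_iff_pairwise]
      refine List.Pairwise.imp_of_mem ?_ hpw
      intro x y hx hy hR
      have h2 := (hpos x hx).2
      have h3 := hent y hy
      refine ⟨hR.1, lt_of_le_of_ne hR.2.1 fun h => ?_, h3.2, by omega⟩
      have := hR.2.2 h
      omega
  · rintro ⟨t, ht, rfl⟩
    have hc := (hiff t).mp ht
    have hall := chain_all hc
    have hlen := chain_length t (1, 1) hc
    dsimp only at hlen hall
    have hpw := List.isChain_iff_pairwise.mp hc
    refine ⟨⟨⟨by simp, ?_, ?_, ?_⟩, ?_⟩, rfl⟩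
    · simp only [List.length_cons]
      omega
    · intro p hp
      rcases List.mem_cons.mp hp with h | h
      · subst h; exact ⟨by omega, le_rfl⟩
      · obtain ⟨q1, q2, q3, q4⟩ := hall p h
        exact ⟨by omega, q3⟩
    · refine List.Pairwise.imp ?_ hpw
      intro x y h
      exact ⟨h.1, le_of_lt h.2.1, fun heq => absurd heq (ne_of_lt h.2.1)⟩
    · intro p hp
      rcases List.mem_cons.mp hp with h | h
      · subst h; exact ⟨one_pos, one_pos⟩
      · obtain ⟨q1, q2, _, _⟩ := hall p h
        exact ⟨by omega, by omega⟩


end Stmt2Aux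

/-- for `n ≥ 2`, `θ_1^{(n)} = C_{n-1}`. -/


theorem stmt2 (n : ℕ) (hn : 2 ≤ n) : theta n 1 = catalan (n - 1) := by
  rw [theta]
  have hcard : Nat.card {l : List (ℕ × ℕ) //
      IsPositiveIndexingMatrix n l ∧ l.head?.map Prod.fst = some 1} =
      ((Stmt2Aux.F (n - 2) (n - 1) 1 1).image (List.cons (1, 1))).card := by
    rw [← Nat.card_eq_finsetCard]
    exact Nat.card_congr (Equiv.subtypeEquivRight fun l => Stmt2Aux.P_iff n hn l)
  rw [hcard, Finset.card_image_of_injective _ List.cons_injective, Stmt2Aux.card_F,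
    Stmt2Aux.Hc_eq_H _ _ _ _ (by omega) le_rfl]
  have e1 : n - 1 - 1 = n - 2 := by omega
  have e2 : (1 : ℕ) - 1 = 0 := rfl
  rw [e1, e2, Stmt2Aux.H_zero]
  congr 1
  omega
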